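/- Let C₁,...,Cₙ each satisfy P(c* ∈ Cᵢ) ≥ 1−αᵢ with possibly different error levels αᵢ, and θ ∈ [0,1). Then the θ-aggregated set C^θ = {c : (1/n)·Σᵢ 1{c ∈ Cᵢ} > θ} satisfies P(c* ∈ C^θ) ≥ 1 − (1/(1−θ))·(1/n)·Σᵢ αᵢ. -/

import Mathlib

open MeasureTheory
open scoped Classical ENNReal

/-- Heterogeneous generalization of Theorem 1: aggregation of prediction sets with
individual error levels αᵢ. -/
theorem aggregated_coverage_heterogeneous {Ω : Type*} [MeasurableSpace Ω] (μ : Measure Ω)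
    [IsProbabilityMeasure μ] {𝒴 : Type*} [Fintype 𝒴] (n : ℕ) (hn : 0 < n)
    (C : Fin n → Ω → Set 𝒴) (cstar : 𝒴)
    (hmeas : ∀ i (c : 𝒴), MeasurableSet {ω | c ∈ C i ω})
    (α : Fin n → ℝ) (hcov : ∀ i, ENNReal.ofReal (1 - α i) ≤ μ {ω | cstar ∈ C i ω})
    (θ : ℝ) (hθ0 : 0 ≤ θ) (hθ1 : θ < 1) :
    ENNReal.ofReal (1 - (1 / (1 - θ)) * ((1 / n : ℝ) * ∑ i, α i)) ≤
      μ {ω | θ < (1 / n : ℝ) * ∑ i, (if cstar ∈ C i ω then (1 : ℝ) else 0)} := by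
  have hθ' : (0:ℝ) < 1 - θ := by linarith
  have hn' : (0:ℝ) < n := by exact_mod_cast hn
  -- α i ≥ 0
  have hα : ∀ i, 0 ≤ α i := by
    intro i
    have h1 : ENNReal.ofReal (1 - α i) ≤ 1 := (hcov i).trans prob_le_one
    rw [ENNReal.ofReal_le_one] at h1
    linarith
  -- miss probability bound
  have hmiss : ∀ i, μ {ω | cstar ∉ C i ω} ≤ ENNReal.ofReal (α i) := by
    intro i
    have hcomp : {ω | cstar ∉ C i ω} = {ω | cstar ∈ C i ω}ᶜ := rfl
    rw [hcomp, prob_compl_eq_one_sub (hmeas i cstar)]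
    have := hcov i
    rcases le_or_gt (α i) 1 with h1 | h1
    · rw [tsub_le_iff_right]
      calc (1:ℝ≥0∞) = ENNReal.ofReal (α i + (1 - α i)) := by norm_num
        _ = ENNReal.ofReal (α i) + ENNReal.ofReal (1 - α i) :=
            ENNReal.ofReal_add (hα i) (by linarith)
        _ ≤ ENNReal.ofReal (α i) + μ {ω | cstar ∈ C i ω} := by gcongr
    · refine tsub_le_self.trans ?_
      rw [show (1:ℝ≥0∞) = ENNReal.ofReal 1 by norm_num]
      exact ENNReal.ofReal_le_ofReal h1.le
  -- the miss-count function
  set f : Ω → ℝ≥0∞ := fun ω => ∑ i, Set.indicator ({ω | cstar ∈ C i ω}ᶜ) (fun _ => 1) ω with hf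
  have hfmeas : Measurable f := by
    apply Finset.measurable_sum
    intro i _
    exact Measurable.indicator measurable_const ((hmeas i cstar).compl)
  have hEmeas : MeasurableSet {ω | ENNReal.ofReal (n * (1 - θ)) ≤ f ω} :=
    measurableSet_le measurable_const hfmeas
  -- Markov
  have hmarkov : ENNReal.ofReal (n * (1 - θ)) * μ {ω | ENNReal.ofReal (n * (1 - θ)) ≤ f ω}
      ≤ ∫⁻ ω, f ω ∂μ := mul_meas_ge_le_lintegral₀ hfmeas.aemeasurable _
  have hint : ∫⁻ ω, f ω ∂μ ≤ ENNReal.ofReal (∑ i, α i) := by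
    calc ∫⁻ ω, f ω ∂μ
        = ∑ i, ∫⁻ ω, Set.indicator ({ω | cstar ∈ C i ω}ᶜ) (fun _ => 1) ω ∂μ := by
          rw [hf]
          exact lintegral_finset_sum _ (fun i _ =>
            Measurable.indicator measurable_const ((hmeas i cstar).compl))
      _ = ∑ i, μ {ω | cstar ∉ C i ω} := by
          refine Finset.sum_congr rfl (fun i _ => ?_)
          rw [lintegral_indicator_const ((hmeas i cstar).compl), one_mul]
          rfl
      _ ≤ ∑ i, ENNReal.ofReal (α i) := Finset.sum_le_sum (fun i _ => hmiss i)
      _ = ENNReal.ofReal (∑ i, α i) := (ENNReal.ofReal_sum_of_nonneg (fun i _ => hα i)).symm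
  have hεpos : (0:ℝ) < n * (1 - θ) := by positivity
  have hε0 : ENNReal.ofReal (n * (1 - θ)) ≠ 0 := by
    simp [ENNReal.ofReal_eq_zero, not_le, hεpos, hn.ne', hθ1]
  have hμE : μ {ω | ENNReal.ofReal (n * (1 - θ)) ≤ f ω}
      ≤ ENNReal.ofReal ((1 / (1 - θ)) * ((1 / n : ℝ) * ∑ i, α i)) := by
    have hkey : ENNReal.ofReal (∑ i, α i) = ENNReal.ofReal (n * (1 - θ)) *
        ENNReal.ofReal ((1 / (1 - θ)) * ((1 / n : ℝ) * ∑ i, α i)) := by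
      rw [← ENNReal.ofReal_mul hεpos.le]
      congr 1
      field_simp
    exact (ENNReal.mul_le_mul_iff_right hε0 ENNReal.ofReal_ne_top).mp
      (hmarkov.trans (hint.trans hkey.le))
  -- the target event contains the complement of E
  have hsub : {ω | ENNReal.ofReal (n * (1 - θ)) ≤ f ω}ᶜ ⊆
      {ω | θ < (1 / n : ℝ) * ∑ i, (if cstar ∈ C i ω then (1 : ℝ) else 0)} := by
    intro ω hω
    simp only [Set.mem_compl_iff, Set.mem_setOf_eq, not_le] at hω ⊢
    -- real miss count
    set m : ℝ := ∑ i, (if cstar ∈ C i ω then (0:ℝ) else 1) with hm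
    have hm0 : 0 ≤ m := Finset.sum_nonneg (fun i _ => by positivity)
    have hfω : f ω = ENNReal.ofReal m := by
      rw [hf, hm, ENNReal.ofReal_sum_of_nonneg (fun i _ => by positivity)]
      refine Finset.sum_congr rfl (fun i _ => ?_)
      by_cases h : cstar ∈ C i ω <;> simp [Set.indicator_apply, h]
    rw [hfω, ENNReal.ofReal_lt_ofReal_iff_of_nonneg (by positivity)] at hω
    have hsum : (∑ i, (if cstar ∈ C i ω then (1:ℝ) else 0)) = n - m := by
      rw [hm, eq_sub_iff_add_eq, ← Finset.sum_add_distrib]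
      have h1 : ∀ i : Fin n,
          ((if cstar ∈ C i ω then (1:ℝ) else 0) + if cstar ∈ C i ω then (0:ℝ) else 1) = 1 := by
        intro i; by_cases h : cstar ∈ C i ω <;> simp [h]
      simp only [h1]
      simp
    rw [hsum, show (1 / (n:ℝ)) * ((n:ℝ) - m) = ((n:ℝ) - m) / n by ring,
      lt_div_iff₀ hn']
    nlinarith
  have hcompl : μ {ω | ENNReal.ofReal (n * (1 - θ)) ≤ f ω}ᶜ =
      1 - μ {ω | ENNReal.ofReal (n * (1 - θ)) ≤ f ω} := prob_compl_eq_one_sub hEmeas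
  calc ENNReal.ofReal (1 - (1 / (1 - θ)) * ((1 / n : ℝ) * ∑ i, α i))
      = 1 - ENNReal.ofReal ((1 / (1 - θ)) * ((1 / n : ℝ) * ∑ i, α i)) := by
        rw [ENNReal.ofReal_sub _ (mul_nonneg (by positivity)
          (mul_nonneg (by positivity) (Finset.sum_nonneg (fun i _ => hα i))))]
        norm_num
    _ ≤ 1 - μ {ω | ENNReal.ofReal (n * (1 - θ)) ≤ f ω} := tsub_le_tsub_left hμE 1
    _ = μ {ω | ENNReal.ofReal (n * (1 - θ)) ≤ f ω}ᶜ := hcompl.symm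
    _ ≤ _ := measure_mono hsub
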